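/- Let φ, ψ be formulas with φ ∧ ψ ⊨ ⊥, let σ ⊆ sig(φ), and let φ', ψ' be conservative extensions of φ and ψ respectively such that sig(φ') ∩ sig(ψ') ⊆ sig(φ) ∩ sig(ψ). Then every Craig separator for φ', ψ' is also a Craig separator for φ, ψ. -/
import Mathlib

inductive PropForm : Type where
  | var : ℕ → PropForm
  | tru : PropForm
  | fls : PropForm
  | neg : PropForm → PropForm
  | conj : PropForm → PropForm → PropForm
  | disj : PropForm → PropForm → PropForm
deriving DecidableEq

namespace PropForm

def eval (v : ℕ → Bool) : PropForm → Bool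
  | var p => v p
  | tru => true
  | fls => false
  | neg φ => !(eval v φ)
  | conj φ ψ => eval v φ && eval v ψ
  | disj φ ψ => eval v φ || eval v ψ

def sig : PropForm → Finset ℕ
  | var p => {p}
  | tru => ∅
  | fls => ∅
  | neg φ => sig φ
  | conj φ ψ => sig φ ∪ sig ψ
  | disj φ ψ => sig φ ∪ sig ψ

def impl (φ ψ : PropForm) : PropForm := disj (neg φ) ψ

def iff (φ ψ : PropForm) : PropForm := conj (impl φ ψ) (impl ψ φ)

end PropForm

/-- Semantic entailment: every model of `φ` is a model of `ψ`. -/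
def Entails (φ ψ : PropForm) : Prop :=
  ∀ v : ℕ → Bool, φ.eval v = true → ψ.eval v = true

/-- `ψ'` is a conservative extension of `ψ`. -/
def ConservativeExt (ψ' ψ : PropForm) : Prop :=
  Entails ψ' ψ ∧ ψ.sig ⊆ ψ'.sig ∧
    ∀ χ : PropForm, χ.sig ⊆ ψ.sig → Entails ψ' χ → Entails ψ χ

def IsSeparator (φ ψ χ : PropForm) : Prop :=
  Entails φ χ ∧ Entails (χ.conj ψ) PropForm.fls ∧ χ.sig ⊆ φ.sig ∩ ψ.sig

/-- Craig separators for conservative extensions sharing no new atoms are Craig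
separators for the original formulas. -/
theorem separator_of_conservative_extensions (φ ψ φ' ψ' : PropForm) (σ : Finset ℕ)
    (hσ : σ ⊆ φ.sig)
    (hunsat : Entails (φ.conj ψ) PropForm.fls)
    (hφ : ConservativeExt φ' φ) (hψ : ConservativeExt ψ' ψ)
    (hsig : φ'.sig ∩ ψ'.sig ⊆ φ.sig ∩ ψ.sig)
    (χ : PropForm) (h : IsSeparator φ' ψ' χ) :
    IsSeparator φ ψ χ := by
  obtain ⟨h1, h2, h3⟩ := h
  have hχsig : χ.sig ⊆ φ.sig ∩ ψ.sig := h3.trans hsig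
  have hχφ : χ.sig ⊆ φ.sig := hχsig.trans (Finset.inter_subset_left)
  have hχψ : χ.sig ⊆ ψ.sig := hχsig.trans (Finset.inter_subset_right)
  refine ⟨hφ.2.2 χ hχφ h1, ?_, hχsig⟩
  have hnψ : Entails ψ χ.neg := by
    refine hψ.2.2 χ.neg hχψ ?_
    intro v hv
    simp only [PropForm.eval, Bool.not_eq_true']
    by_contra hc
    have := h2 v
    simp only [PropForm.eval, Bool.and_eq_true] at this
    exact absurd (this ⟨Bool.not_eq_false _ ▸ (by simpa using hc), hv⟩) (by simp [PropForm.eval])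
  intro v hv
  simp only [PropForm.eval, Bool.and_eq_true] at hv
  have := hnψ v hv.2
  simp only [PropForm.eval, Bool.not_eq_true'] at this
  rw [hv.1] at this
  exact absurd this (by simp)
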